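/- Let G be a block graph, let k ≥ 0, and let P = (v_0, e_1, v_1, …, e_{k+1}, v_{k+1}) and Q = (v_k, e_{k+1}, v_{k+1}, …, e_n, v_n) be two shortest paths in G that share the edge e_{k+1}. Then their union (v_0, e_1, v_1, …, e_n, v_n) is the unique shortest path between v_0 and v_n. -/

import Mathlib

open MvPolynomial SimpleGraph
open scoped Classical

/-- A graph is a block graph if every two distinct vertices joined by two
internally-vertex-disjoint paths are adjacent; equivalently, every
2-connected component of the graph is a complete subgraph. -/
def IsBlockGraph {V : Type*} (G : SimpleGraph V) : Prop :=
  ∀ u v : V, u ≠ v →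
    (∃ p q : G.Walk u v, p.IsPath ∧ q.IsPath ∧ p ≠ q ∧
      ∀ w, w ∈ p.support → w ∈ q.support → w = u ∨ w = v) →
    G.Adj u v

/-- A shortest path between its endpoints: a path of minimal length. -/
def IsShortestPath {V : Type*} (G : SimpleGraph V) {u v : V} (p : G.Walk u v) : Prop :=
  p.IsPath ∧ p.length = G.dist u v

/-- Λ(p): the multiset of vertex colors and edge colors along a walk. -/
def pathColors {V : Type*} {G : SimpleGraph V} (vcol : V → ℕ) (ecol : Sym2 V → ℕ)
    {u v : V} (p : G.Walk u v) : Multiset ℕ :=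
  ↑(p.support.map vcol) + ↑(p.edges.map ecol)


namespace BlockGraphAux

open SimpleGraph Walk

variable {V : Type*} {G : SimpleGraph V}

lemma length_take_add_drop {u v w : V} (p : G.Walk u v) (hw : w ∈ p.support) :
    (p.takeUntil w hw).length + (p.dropUntil w hw).length = p.length := by
  rw [← Walk.length_append, Walk.take_spec]

lemma split_dist (hconn : G.Connected) {u v w : V} (p : G.Walk u v)
    (hp : p.length = G.dist u v) (hw : w ∈ p.support) :
    (p.takeUntil w hw).length = G.dist u w ∧ (p.dropUntil w hw).length = G.dist w v := by
  have h1 := SimpleGraph.dist_le (p.takeUntil w hw)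
  have h2 := SimpleGraph.dist_le (p.dropUntil w hw)
  have h3 := hconn.dist_triangle (u := u) (v := w) (w := v)
  have h4 := length_take_add_drop p hw
  omega

lemma dist_add_of_mem (hconn : G.Connected) {u v w : V} (p : G.Walk u v)
    (hp : p.length = G.dist u v) (hw : w ∈ p.support) :
    G.dist u w + G.dist w v = G.dist u v := by
  obtain ⟨h1, h2⟩ := split_dist hconn p hp hw
  have h4 := length_take_add_drop p hw
  omega

lemma base_facts (hconn : G.Connected) {v₀ vₖ vₖ₁ vₙ : V} (A : G.Walk v₀ vₖ)
    (h : G.Adj vₖ vₖ₁) (B : G.Walk vₖ₁ vₙ)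
    (hP : IsShortestPath G (A.concat h)) (hQ : IsShortestPath G (Walk.cons h B)) :
    G.dist v₀ vₖ = A.length ∧ G.dist v₀ vₖ₁ = A.length + 1 ∧
      G.dist vₖ₁ vₙ = B.length ∧ G.dist vₖ vₙ = B.length + 1 ∧
      A.IsPath ∧ B.IsPath := by
  have hPlen : G.dist v₀ vₖ₁ = A.length + 1 := by
    have := hP.2; rw [Walk.length_concat] at this; omega
  have hQlen : G.dist vₖ vₙ = B.length + 1 := by
    have := hQ.2; rw [Walk.length_cons] at this; omega
  have hone : G.dist vₖ vₖ₁ ≤ 1 := by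
    simpa using SimpleGraph.dist_le (Walk.cons h Walk.nil)
  have hone' : G.dist vₖ₁ vₙ ≤ B.length := SimpleGraph.dist_le B
  have htri : G.dist v₀ vₖ₁ ≤ G.dist v₀ vₖ + G.dist vₖ vₖ₁ := hconn.dist_triangle
  have htri' : G.dist vₖ vₙ ≤ G.dist vₖ vₖ₁ + G.dist vₖ₁ vₙ := hconn.dist_triangle
  have hA := SimpleGraph.dist_le A
  have hApath : A.IsPath := by
    have := hP.1; rw [Walk.concat_eq_append] at this; exact this.of_append_left
  exact ⟨by omega, hPlen, by omega, hQlen, hApath, hQ.1.of_cons⟩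

lemma AB_disjoint (hconn : G.Connected) {v₀ vₖ vₖ₁ vₙ : V} (A : G.Walk v₀ vₖ)
    (h : G.Adj vₖ vₖ₁) (B : G.Walk vₖ₁ vₙ)
    (hP : IsShortestPath G (A.concat h)) (hQ : IsShortestPath G (Walk.cons h B)) :
    ∀ w ∈ A.support, w ∉ B.support := by
  obtain ⟨dA, dP, dB, dQ, hApath, hBpath⟩ := base_facts hconn A h B hP hQ
  intro w hwA hwB
  have hwP : w ∈ (A.concat h).support := by
    rw [Walk.concat_eq_append, Walk.mem_support_append_iff]; exact Or.inl hwA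
  have hwQ : w ∈ (Walk.cons h B).support := by
    rw [Walk.support_cons]; exact List.mem_cons_of_mem _ hwB
  have e1 := dist_add_of_mem hconn A dA.symm hwA
  have e2 := dist_add_of_mem hconn (A.concat h) hP.2 hwP
  have e3 := dist_add_of_mem hconn B dB.symm hwB
  have e4 := dist_add_of_mem hconn (Walk.cons h B) hQ.2 hwQ
  have c1 : G.dist vₖ₁ w = G.dist w vₖ₁ := SimpleGraph.dist_comm
  have c2 : G.dist vₖ w = G.dist w vₖ := SimpleGraph.dist_comm
  omega

lemma glue_isPath (hconn : G.Connected) {v₀ vₖ vₖ₁ vₙ : V} (A : G.Walk v₀ vₖ)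
    (h : G.Adj vₖ vₖ₁) (B : G.Walk vₖ₁ vₙ)
    (hP : IsShortestPath G (A.concat h)) (hQ : IsShortestPath G (Walk.cons h B)) :
    (A.append (Walk.cons h B)).IsPath := by
  obtain ⟨dA, dP, dB, dQ, hApath, hBpath⟩ := base_facts hconn A h B hP hQ
  rw [Walk.isPath_def, Walk.support_append, Walk.support_cons, List.tail_cons,
    List.nodup_append]
  exact ⟨hApath.support_nodup, hBpath.support_nodup,
    fun w hwA x hx e => by subst e; exact AB_disjoint hconn A h B hP hQ w hwA hx⟩

lemma crux (hconn : G.Connected) (hblock : IsBlockGraph G) :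
    ∀ N : ℕ, ∀ {v₀ vₖ vₖ₁ vₙ : V} (A : G.Walk v₀ vₖ) (h : G.Adj vₖ vₖ₁) (B : G.Walk vₖ₁ vₙ),
      IsShortestPath G (A.concat h) → IsShortestPath G (Walk.cons h B) →
      A.length + B.length ≤ N →
      G.dist v₀ vₙ = A.length + B.length + 1 := by
  intro N
  induction N using Nat.strong_induction_on with
  | _ N IH =>
  intro v₀ vₖ vₖ₁ vₙ A h B hP hQ hN
  obtain ⟨dA, dP, dB, dQ, hApath, hBpath⟩ := base_facts hconn A h B hP hQ
  have hdisj : ∀ w ∈ A.support, w ∉ B.support := AB_disjoint hconn A h B hP hQ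
  by_contra hm
  have hub : G.dist v₀ vₙ ≤ A.length + B.length + 1 := by
    have := SimpleGraph.dist_le (A.append (Walk.cons h B))
    rw [Walk.length_append, Walk.length_cons] at this; omega
  have hm' : G.dist v₀ vₙ ≤ A.length + B.length := by omega
  rcases Nat.eq_zero_or_pos A.length with ha0 | ha
  · have e : v₀ = vₖ := Walk.eq_of_length_eq_zero (p := A) ha0
    subst e; omega
  rcases Nat.eq_zero_or_pos B.length with hb0 | hb
  · have e : vₖ₁ = vₙ := Walk.eq_of_length_eq_zero (p := B) hb0
    subst e; omega
  have hne : v₀ ≠ vₙ := by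
    intro e; subst e
    have c1 : G.dist vₖ₁ v₀ = G.dist v₀ vₖ₁ := SimpleGraph.dist_comm
    have c2 : G.dist vₖ v₀ = G.dist v₀ vₖ := SimpleGraph.dist_comm
    omega
  obtain ⟨R, hRpath, hRlen⟩ := hconn.exists_path_of_dist v₀ vₙ
  have hk : vₖ ∉ R.support := by
    intro hw
    have := dist_add_of_mem hconn R hRlen hw
    omega
  have hk1 : vₖ₁ ∉ R.support := by
    intro hw
    have := dist_add_of_mem hconn R hRlen hw
    have c1 : G.dist vₖ₁ vₙ = G.dist vₖ₁ vₙ := rfl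
    omega
  have hk1A : vₖ₁ ∉ A.support := by
    intro hx
    have hnd := hP.1
    rw [Walk.isPath_def, Walk.support_concat, List.nodup_append] at hnd
    exact hnd.2.2 _ hx _ (List.mem_singleton_self _) rfl
  have hkB : vₖ ∉ B.support := by
    have := hQ.1
    rw [Walk.cons_isPath_iff] at this
    exact this.2
  -- no internal sharing with A
  have hA' : ∀ w, w ∈ R.support → w ∈ A.support → w = v₀ := by
    intro w hwR hwA
    by_contra hwne
    obtain ⟨ht, hdr⟩ := split_dist hconn A dA.symm hwA
    have hsum := length_take_add_drop A hwA
    have hi : 0 < G.dist v₀ w := hconn.pos_dist_of_ne (Ne.symm hwne)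
    have hP'path : ((A.dropUntil w hwA).concat h).IsPath := by
      rw [Walk.isPath_def, Walk.support_concat, List.nodup_append]
      refine ⟨(hApath.dropUntil hwA).support_nodup, List.nodup_singleton _, ?_⟩
      intro x hx b hxe hxb
      rw [List.mem_singleton] at hxe
      subst hxb
      subst hxe
      exact hk1A (Walk.support_dropUntil_subset A hwA hx)
    have hP'len : ((A.dropUntil w hwA).concat h).length = G.dist w vₖ₁ := by
      have le1 := SimpleGraph.dist_le ((A.dropUntil w hwA).concat h)
      have tri : G.dist v₀ vₖ₁ ≤ G.dist v₀ w + G.dist w vₖ₁ := hconn.dist_triangle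
      rw [Walk.length_concat] at le1 ⊢
      omega
    have hrec := IH ((A.dropUntil w hwA).length + B.length) (by omega)
      (A.dropUntil w hwA) h B ⟨hP'path, hP'len⟩ hQ le_rfl
    have hsplitR := dist_add_of_mem hconn R hRlen hwR
    omega
  -- no internal sharing with B
  have hB' : ∀ w, w ∈ R.support → w ∈ B.support → w = vₙ := by
    intro w hwR hwB
    by_contra hwne
    obtain ⟨ht, hdr⟩ := split_dist hconn B dB.symm hwB
    have hsum := length_take_add_drop B hwB
    have hj : 0 < G.dist w vₙ := hconn.pos_dist_of_ne hwne
    have hQ'path : (Walk.cons h (B.takeUntil w hwB)).IsPath := by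
      rw [Walk.cons_isPath_iff]
      refine ⟨hBpath.takeUntil hwB, fun hc => ?_⟩
      exact hkB (Walk.support_takeUntil_subset B hwB hc)
    have hQ'len : (Walk.cons h (B.takeUntil w hwB)).length = G.dist vₖ w := by
      have le1 := SimpleGraph.dist_le (Walk.cons h (B.takeUntil w hwB))
      have tri : G.dist vₖ vₙ ≤ G.dist vₖ w + G.dist w vₙ := hconn.dist_triangle
      rw [Walk.length_cons] at le1 ⊢
      omega
    have hrec := IH (A.length + (B.takeUntil w hwB).length) (by omega)
      A h (B.takeUntil w hwB) hP ⟨hQ'path, hQ'len⟩ le_rfl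
    have hsplitR := dist_add_of_mem hconn R hRlen hwR
    omega
  -- R and the glued walk are internally disjoint
  have hXpath := glue_isPath hconn A h B hP hQ
  have hadj : G.Adj v₀ vₙ := by
    refine hblock v₀ vₙ hne ⟨R, A.append (Walk.cons h B), hRpath, hXpath, ?_, ?_⟩
    · intro e
      have := congrArg Walk.length e
      rw [hRlen, Walk.length_append, Walk.length_cons] at this
      omega
    · intro w hwR hwX
      rw [Walk.mem_support_append_iff] at hwX
      rcases hwX with hwA | hwC
      · exact Or.inl (hA' w hwR hwA)
      · rw [Walk.support_cons, List.mem_cons] at hwC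
        rcases hwC with rfl | hwB
        · exact absurd hwR hk
        · exact Or.inr (hB' w hwR hwB)
  have hm1 : G.dist v₀ vₙ ≤ 1 := by
    simpa using SimpleGraph.dist_le (Walk.cons hadj Walk.nil)
  have hne2 : v₀ ≠ vₖ₁ := by
    intro e; subst e
    have : G.dist v₀ v₀ = 0 := SimpleGraph.dist_self
    omega
  have hadj2 : G.Adj v₀ vₖ₁ := by
    refine hblock v₀ vₖ₁ hne2 ⟨A.concat h, Walk.cons hadj B.reverse, hP.1, ?_, ?_, ?_⟩
    · rw [Walk.cons_isPath_iff]
      refine ⟨hBpath.reverse, fun hc => ?_⟩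
      rw [Walk.support_reverse, List.mem_reverse] at hc
      exact hdisj v₀ A.start_mem_support hc
    · intro e
      have hv : vₙ ∈ (A.concat h).support := by
        rw [e, Walk.support_cons]
        refine List.mem_cons_of_mem _ ?_
        rw [Walk.support_reverse, List.mem_reverse]
        exact B.end_mem_support
      rw [Walk.support_concat] at hv
      simp only [List.concat_eq_append, List.mem_append, List.mem_singleton] at hv
      rcases hv with hv | hv
      · exact hdisj vₙ hv B.end_mem_support
      · subst hv
        have : G.dist vₙ vₙ = 0 := SimpleGraph.dist_self
        omega
    · intro w hwP hwq
      rw [Walk.support_concat] at hwP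
      simp only [List.concat_eq_append, List.mem_append, List.mem_singleton] at hwP
      rcases hwP with hwA | rfl
      · rw [Walk.support_cons, List.mem_cons] at hwq
        rcases hwq with rfl | hwB'
        · exact Or.inl rfl
        · rw [Walk.support_reverse, List.mem_reverse] at hwB'
          exact absurd hwB' (hdisj w hwA)
      · exact Or.inr rfl
  have : G.dist v₀ vₖ₁ ≤ 1 := by
    simpa using SimpleGraph.dist_le (Walk.cons hadj2 Walk.nil)
  omega

lemma eq_cons_nil_of_length_one {u v : V} (p : G.Walk u v) (hp : p.length = 1) :
    ∃ h : G.Adj u v, p = Walk.cons h Walk.nil := by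
  cases p with
  | nil => simp at hp
  | cons h q =>
    cases q with
    | nil => exact ⟨h, rfl⟩
    | cons h' q' => simp [Walk.length_cons] at hp

lemma unique_shortest (hconn : G.Connected) (hblock : IsBlockGraph G) :
    ∀ N : ℕ, ∀ {u v : V} (p q : G.Walk u v), p.IsPath → q.IsPath →
      p.length = G.dist u v → q.length = G.dist u v → G.dist u v ≤ N → p = q := by
  intro N
  induction N with
  | zero =>
    intro u v p q hp hq hlp hlq hN
    have huv : u = v := Walk.eq_of_length_eq_zero (p := p) (by omega)
    subst huv
    have e1 : p = Walk.nil := Walk.nil_iff_eq_nil.mp (Walk.length_eq_zero_iff.mp (by omega))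
    have e2 : q = Walk.nil := Walk.nil_iff_eq_nil.mp (Walk.length_eq_zero_iff.mp (by omega))
    rw [e1, e2]
  | succ N IH =>
    intro u v p q hp hq hlp hlq hN
    by_cases hd0 : G.dist u v = 0
    · have huv : u = v := Walk.eq_of_length_eq_zero (p := p) (by omega)
      subst huv
      have e1 : p = Walk.nil := Walk.nil_iff_eq_nil.mp (Walk.length_eq_zero_iff.mp (by omega))
      have e2 : q = Walk.nil := Walk.nil_iff_eq_nil.mp (Walk.length_eq_zero_iff.mp (by omega))
      rw [e1, e2]
    · have hne : u ≠ v := by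
        intro e; subst e; exact hd0 SimpleGraph.dist_self
      by_cases hsh : ∃ w, w ∈ p.support ∧ w ∈ q.support ∧ w ≠ u ∧ w ≠ v
      · obtain ⟨w, hwp, hwq, hwu, hwv⟩ := hsh
        obtain ⟨hpt, hpd⟩ := split_dist hconn p hlp hwp
        obtain ⟨hqt, hqd⟩ := split_dist hconn q hlq hwq
        have hadd := dist_add_of_mem hconn p hlp hwp
        have h1 : 0 < G.dist u w := hconn.pos_dist_of_ne (Ne.symm hwu)
        have h2 : 0 < G.dist w v := hconn.pos_dist_of_ne hwv
        have e1 : p.takeUntil w hwp = q.takeUntil w hwq :=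
          IH _ _ (hp.takeUntil hwp) (hq.takeUntil hwq) hpt hqt (by omega)
        have e2 : p.dropUntil w hwp = q.dropUntil w hwq :=
          IH _ _ (hp.dropUntil hwp) (hq.dropUntil hwq) hpd hqd (by omega)
        calc p = (p.takeUntil w hwp).append (p.dropUntil w hwp) := (Walk.take_spec p hwp).symm
          _ = (q.takeUntil w hwq).append (q.dropUntil w hwq) := by rw [e1, e2]
          _ = q := Walk.take_spec q hwq
      · by_cases hpq : p = q
        · exact hpq
        · have hadj : G.Adj u v := by
            refine hblock u v hne ⟨p, q, hp, hq, hpq, fun w hwp hwq => ?_⟩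
            by_contra hc
            push_neg at hc
            exact hsh ⟨w, hwp, hwq, hc.1, hc.2⟩
          have hle : G.dist u v ≤ 1 := by
            simpa using SimpleGraph.dist_le (Walk.cons hadj Walk.nil)
          obtain ⟨h1, e1⟩ := eq_cons_nil_of_length_one p (by omega)
          obtain ⟨h2, e2⟩ := eq_cons_nil_of_length_one q (by omega)
          rw [e1, e2]

end BlockGraphAux

/-- Lemma 2.7: two shortest paths sharing an edge glue to the
unique shortest path between the outer endpoints. -/
theorem glueing_shortest_paths_same_edge {V : Type*} [Fintype V] (G : SimpleGraph V)
    (hconn : G.Connected) (hblock : IsBlockGraph G)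
    {v₀ vₖ vₖ₁ vₙ : V} (A : G.Walk v₀ vₖ) (h : G.Adj vₖ vₖ₁) (B : G.Walk vₖ₁ vₙ)
    (hP : IsShortestPath G (A.concat h))
    (hQ : IsShortestPath G (SimpleGraph.Walk.cons h B)) :
    IsShortestPath G (A.append (SimpleGraph.Walk.cons h B)) ∧
      ∀ W : G.Walk v₀ vₙ, IsShortestPath G W → W = A.append (SimpleGraph.Walk.cons h B) := by
  classical
  have hd := BlockGraphAux.crux hconn hblock (A.length + B.length) A h B hP hQ le_rfl
  have hXpath := BlockGraphAux.glue_isPath hconn A h B hP hQ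
  have hXlen : (A.append (SimpleGraph.Walk.cons h B)).length = A.length + B.length + 1 := by
    rw [SimpleGraph.Walk.length_append, SimpleGraph.Walk.length_cons]
    omega
  refine ⟨⟨hXpath, by rw [hXlen, hd]⟩, fun W hW => ?_⟩
  exact BlockGraphAux.unique_shortest hconn hblock (G.dist v₀ vₙ) W _ hW.1 hXpath hW.2
    (by rw [hXlen, hd]) le_rfl
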